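/- Let r ≥ 2 and Δ ≥ 1 be integers, and define c(j) = h(j/(Δ√r)) where h(α) = (1/2)(1 - arccos(α)/π). Then for every integer j with 1 ≤ j ≤ Δ, we have c(j)/c(j-1) ≥ 1 + 4/(3πΔ√r). -/

import Mathlib

set_option maxHeartbeats 1000000

open Real

/-- sin is 1-Lipschitz (from below). -/
lemma my_sin_sub_le {u v : ℝ} (huv : u ≤ v) : Real.sin v - Real.sin u ≤ v - u := by
  have h1 : Real.sin v - Real.sin u =
      2 * Real.sin ((v - u) / 2) * Real.cos ((v + u) / 2) := Real.sin_sub_sin v u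
  have h2 : Real.sin ((v - u) / 2) ≤ (v - u) / 2 := Real.sin_le (by linarith)
  have h3 : Real.cos ((v + u) / 2) ≤ 1 := Real.cos_le_one _
  have h4 : -1 ≤ Real.cos ((v + u) / 2) := Real.neg_one_le_cos _
  rcases le_or_gt (v - u) 2 with hc | hc
  · have hs0 : 0 ≤ Real.sin ((v - u) / 2) := by
      apply Real.sin_nonneg_of_nonneg_of_le_pi (by linarith)
      linarith [Real.pi_gt_three]
    nlinarith
  · nlinarith [Real.sin_le_one v, Real.neg_one_le_sin u]

/-- arccos decreases at least linearly: arccos a - arccos b ≥ b - a. -/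
lemma my_arccos_sub_ge {a b : ℝ} (ha : -1 ≤ a) (hab : a ≤ b) (hb : b ≤ 1) :
    b - a ≤ Real.arccos a - Real.arccos b := by
  have ha1 : a ≤ 1 := le_trans hab hb
  have hb1 : -1 ≤ b := le_trans ha hab
  have hu : Real.sin (Real.arcsin a) = a := Real.sin_arcsin ha ha1
  have hv : Real.sin (Real.arcsin b) = b := Real.sin_arcsin hb1 hb
  have hmono : Real.arcsin a ≤ Real.arcsin b := Real.monotone_arcsin hab
  have key : b - a ≤ Real.arcsin b - Real.arcsin a := by
    have := my_sin_sub_le hmono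
    rw [hu, hv] at this
    linarith
  rw [Real.arccos, Real.arccos]
  linarith

theorem c_ratio_lower_bound (r Δ : ℕ) (hr : 2 ≤ r) (hΔ : 1 ≤ Δ)
    (h : ℝ → ℝ) (hdef : ∀ α, h α = (1 / 2) * (1 - Real.arccos α / Real.pi))
    (c : ℕ → ℝ) (hc : ∀ j, c j = h ((j : ℝ) / (Δ * Real.sqrt r)))
    (j : ℕ) (hj1 : 1 ≤ j) (hj2 : j ≤ Δ) :
    c j / c (j - 1) ≥ 1 + 4 / (3 * Real.pi * Δ * Real.sqrt r) := by
  have hπ : 0 < Real.pi := Real.pi_pos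
  have hr2 : (2:ℝ) ≤ (r:ℝ) := by exact_mod_cast hr
  have hs2 : Real.sqrt 2 ≤ Real.sqrt r := Real.sqrt_le_sqrt hr2
  have hs2sq : Real.sqrt 2 ^ 2 = 2 := Real.sq_sqrt (by norm_num)
  have hs2pos : 0 < Real.sqrt 2 := Real.sqrt_pos.mpr (by norm_num)
  have hs21 : (1:ℝ) < Real.sqrt 2 := by nlinarith
  have hsr1 : (1:ℝ) < Real.sqrt r := lt_of_lt_of_le hs21 hs2
  have hΔ1 : (1:ℝ) ≤ (Δ:ℝ) := by exact_mod_cast hΔ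
  set D : ℝ := (Δ:ℝ) * Real.sqrt r with hDdef
  have hD0 : 0 < D := by positivity
  have hjΔ : (j:ℝ) ≤ (Δ:ℝ) := by exact_mod_cast hj2
  have hj1' : (1:ℝ) ≤ (j:ℝ) := by exact_mod_cast hj1
  set a : ℝ := ((j:ℝ) - 1) / D with hadef
  set b : ℝ := (j:ℝ) / D with hbdef
  have hcast : ((j - 1 : ℕ) : ℝ) = (j:ℝ) - 1 := by
    have := Nat.cast_sub (R := ℝ) hj1
    simpa using this
  have hcb : c j = (1/2) * (1 - Real.arccos b / Real.pi) := by rw [hc, hdef]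
  have hca : c (j - 1) = (1/2) * (1 - Real.arccos a / Real.pi) := by
    rw [hc, hdef, hcast]
  have ha0 : 0 ≤ a := by
    apply div_nonneg _ hD0.le; linarith
  have hab : a ≤ b := by
    rw [hadef, hbdef, div_le_div_iff₀ hD0 hD0]
    nlinarith
  -- b ≤ √2/2
  have hbound : b ≤ Real.sqrt 2 / 2 := by
    have h1 : b ≤ (Δ:ℝ) / D := by
      rw [hbdef, div_le_div_iff₀ hD0 hD0]
      nlinarith
    have h2 : (Δ:ℝ) / D = 1 / Real.sqrt r := by
      rw [hDdef]
      field_simp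
    have h3 : 1 / Real.sqrt r ≤ 1 / Real.sqrt 2 :=
      one_div_le_one_div_of_le hs2pos hs2
    have h4 : 1 / Real.sqrt 2 = Real.sqrt 2 / 2 := by
      rw [div_eq_div_iff hs2pos.ne' (by norm_num : (2:ℝ) ≠ 0)]
      nlinarith
    calc b ≤ (Δ:ℝ) / D := h1
      _ = 1 / Real.sqrt r := h2
      _ ≤ 1 / Real.sqrt 2 := h3
      _ = Real.sqrt 2 / 2 := h4
  have hb1 : b ≤ 1 := by nlinarith
  have habound : a ≤ Real.sqrt 2 / 2 := le_trans hab hbound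
  -- arccos a ≥ π/4
  have harccos_lb : Real.pi / 4 ≤ Real.arccos a := by
    have h1 : Real.arcsin a ≤ Real.arcsin (Real.sqrt 2 / 2) :=
      Real.monotone_arcsin habound
    have h2 : Real.arcsin (Real.sqrt 2 / 2) = Real.pi / 4 := by
      rw [← Real.sin_pi_div_four]
      exact Real.arcsin_sin (by linarith) (by linarith)
    rw [Real.arccos]
    linarith
  -- arccos a ≤ π/2
  have harccos_ub : Real.arccos a ≤ Real.pi / 2 := Real.arccos_le_pi_div_two.mpr ha0
  -- difference of arccos
  have hdiff : b - a ≤ Real.arccos a - Real.arccos b :=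
    my_arccos_sub_ge (by linarith) hab hb1
  have hba : b - a = 1 / D := by
    rw [hadef, hbdef, div_sub_div_same]
    norm_num
  -- bounds on c values
  have hA_lb : 1/4 ≤ c (j - 1) := by
    rw [hca]
    have hq : Real.arccos a / Real.pi ≤ 1/2 := by
      rw [div_le_iff₀ hπ]; linarith
    linarith
  have hA_ub : c (j - 1) ≤ 3/8 := by
    rw [hca]
    have h5 : 1/4 ≤ Real.arccos a / Real.pi := by
      rw [le_div_iff₀ hπ]; linarith
    linarith
  have hBA : 1 / (2 * Real.pi * D) ≤ c j - c (j - 1) := by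
    rw [hcb, hca]
    have h6 : 1 / D ≤ Real.arccos a - Real.arccos b := by linarith [hba ▸ hdiff]
    have h7 : (1/2) * (1 - Real.arccos b / Real.pi) - (1/2) * (1 - Real.arccos a / Real.pi)
        = (Real.arccos a - Real.arccos b) / (2 * Real.pi) := by
      field_simp
      ring
    rw [h7]
    rw [div_le_div_iff₀ (by positivity) (by positivity)]
    calc 1 * (2 * Real.pi) = (1 / D) * (2 * Real.pi * D) := by field_simp
      _ ≤ (Real.arccos a - Real.arccos b) * (2 * Real.pi * D) :=
          mul_le_mul_of_nonneg_right h6 (by positivity)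
  have hA0 : 0 < c (j - 1) := by linarith
  -- final computation
  rw [ge_iff_le, le_div_iff₀ hA0]
  have hrw : 3 * Real.pi * (Δ:ℝ) * Real.sqrt r = 3 * Real.pi * D := by
    rw [hDdef]; ring
  rw [hrw]
  have ht0 : 0 ≤ 4 / (3 * Real.pi * D) := by positivity
  have h8 : 4 / (3 * Real.pi * D) * c (j - 1) ≤ 4 / (3 * Real.pi * D) * (3/8) :=
    mul_le_mul_of_nonneg_left hA_ub ht0
  have h9 : 4 / (3 * Real.pi * D) * (3/8) = 1 / (2 * Real.pi * D) := by
    rw [div_mul_eq_mul_div, div_eq_div_iff (by positivity) (by positivity)]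
    ring
  have h10 : (1 + 4 / (3 * Real.pi * D)) * c (j - 1)
      = c (j - 1) + 4 / (3 * Real.pi * D) * c (j - 1) := by ring
  linarith
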